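/- Every path P_n with n ≥ 3 vertices admits a strongly antimagic labeling, i.e., a bijection f from its n-1 edges to {1,...,n-1} such that the vertex sums φ_f(v) = Σ_{v∈e} f(e) are pairwise distinct and φ_f(u) > φ_f(v) whenever deg(u) > deg(v). -/

import Mathlib

open Finset

open scoped Classical

noncomputable section

variable {V : Type*} [Fintype V] [DecidableEq V]

/-- The finset of edges of a simple graph on a finite vertex type. -/
def edges (G : SimpleGraph V) : Finset (Sym2 V) :=
  Finset.univ.filter (fun e => e ∈ G.edgeSet)

/-- The vertex sum `φ_f(v)`: the sum of the labels of the edges incident to `v`. -/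
def phi (G : SimpleGraph V) (f : Sym2 V → ℕ) (v : V) : ℕ :=
  ∑ e ∈ (edges G).filter (fun e => v ∈ e), f e

/-- The degree of a vertex: the number of edges incident to it. -/
def deg (G : SimpleGraph V) (v : V) : ℕ :=
  ((edges G).filter (fun e => v ∈ e)).card

/-- `f` is a strongly antimagic labeling of `G`: a bijection from the edge set onto
`{1, …, m}` with pairwise distinct vertex sums, such that larger degree forces a
larger vertex sum. -/
def IsStronglyAntimagicLabeling (G : SimpleGraph V) (f : Sym2 V → ℕ) : Prop :=
  Set.BijOn f (edges G : Set (Sym2 V)) (Set.Icc 1 (edges G).card) ∧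
  (∀ u v : V, u ≠ v → phi G f u ≠ phi G f v) ∧
  (∀ u v : V, deg G v < deg G u → phi G f v < phi G f u)

/-- A graph is strongly antimagic if it admits a strongly antimagic labeling. -/
def IsStronglyAntimagic (G : SimpleGraph V) : Prop :=
  ∃ f : Sym2 V → ℕ, IsStronglyAntimagicLabeling G f

/-- Label for the `i`-th edge (0-indexed) of a path with `m` edges:
odd labels ascending on the first half, even labels descending on the second. -/
def pl (m i : ℕ) : ℕ := if i < (m+1)/2 then 2*i+1 else 2*(m-i)

lemma pl_bounds {m i : ℕ} (h : i < m) : 1 ≤ pl m i ∧ pl m i ≤ m := by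
  unfold pl; split_ifs <;> omega

lemma pl_inj {m i j : ℕ} (hi : i < m) (hj : j < m) (h : pl m i = pl m j) : i = j := by
  unfold pl at h; split_ifs at h <;> omega

lemma pl_surj {m k : ℕ} (h1 : 1 ≤ k) (h2 : k ≤ m) : ∃ i, i < m ∧ pl m i = k := by
  rcases Nat.even_or_odd k with ⟨t, rfl⟩ | ⟨t, rfl⟩
  · exact ⟨m - t, by unfold pl; refine ⟨by omega, ?_⟩; split_ifs <;> omega⟩
  · exact ⟨t, by unfold pl; refine ⟨by omega, ?_⟩; split_ifs <;> omega⟩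

lemma pl_sum_ge {m j : ℕ} (hm : 2 ≤ m) (h1 : 1 ≤ j) (h2 : j ≤ m - 1) :
    3 ≤ pl m (j-1) + pl m j := by
  unfold pl; split_ifs <;> omega

lemma pl_sum_inj {m j k : ℕ} (h1 : 1 ≤ j) (hjk : j < k) (h2 : k ≤ m - 1) :
    pl m (j-1) + pl m j ≠ pl m (k-1) + pl m k := by
  unfold pl; split_ifs <;> omega

open Fin.NatCast in
/-- Every path `P n` with `n ≥ 3` vertices is strongly antimagic. -/
theorem stmt_0 (n : ℕ) (hn : 3 ≤ n) :
    IsStronglyAntimagic (SimpleGraph.pathGraph n) := by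
  haveI : NeZero n := ⟨by omega⟩
  set m := n - 1 with hmdef
  have hm : 2 ≤ m := by omega
  set E : ℕ → Sym2 (Fin n) := fun i => s((i : Fin n), ((i+1 : ℕ) : Fin n)) with hE
  have hEmem : ∀ i, i + 1 < n → E i ∈ edges (SimpleGraph.pathGraph n) := by
    intro i hi
    simp only [edges, Finset.mem_filter, Finset.mem_univ, true_and,
      SimpleGraph.mem_edgeSet, SimpleGraph.pathGraph_adj, hE]
    left
    rw [Fin.val_cast_of_lt (by omega), Fin.val_cast_of_lt hi]
  have hchar : ∀ e, e ∈ edges (SimpleGraph.pathGraph n) ↔ ∃ i, i + 1 < n ∧ e = E i := by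
    intro e
    constructor
    · intro he
      induction e using Sym2.inductionOn with
      | hf a b =>
        simp only [edges, Finset.mem_filter, Finset.mem_univ, true_and,
          SimpleGraph.mem_edgeSet, SimpleGraph.pathGraph_adj] at he
        rcases he with h | h
        · refine ⟨a.val, by omega, ?_⟩
          have h1 : ((a.val : ℕ) : Fin n) = a := Fin.cast_val_eq_self a
          have h2 : ((a.val + 1 : ℕ) : Fin n) = b :=
            Fin.ext (by rw [Fin.val_cast_of_lt (by omega)]; omega)
          rw [hE]; dsimp only; rw [h1, h2]
        · refine ⟨b.val, by omega, ?_⟩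
          have h1 : ((b.val : ℕ) : Fin n) = b := Fin.cast_val_eq_self b
          have h2 : ((b.val + 1 : ℕ) : Fin n) = a :=
            Fin.ext (by rw [Fin.val_cast_of_lt (by omega)]; omega)
          rw [hE]; dsimp only; rw [h1, h2, Sym2.eq_swap]
    · rintro ⟨i, hi, rfl⟩; exact hEmem i hi
  have hEval : ∀ i, i + 1 < n → ∀ v : Fin n, (v ∈ E i ↔ (v.val = i ∨ v.val = i + 1)) := by
    intro i hi v
    rw [hE]; dsimp only
    rw [Sym2.mem_iff, Fin.ext_iff, Fin.ext_iff,
      Fin.val_cast_of_lt (by omega), Fin.val_cast_of_lt hi]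
  have hEinj : ∀ i j, i + 1 < n → j + 1 < n → E i = E j → i = j := by
    intro i j hi hj h
    have h1 : ((i : ℕ) : Fin n) ∈ E j := by
      rw [← h, hE]; exact Sym2.mem_mk_left _ _
    have h2 : ((i + 1 : ℕ) : Fin n) ∈ E j := by
      rw [← h, hE]; exact Sym2.mem_mk_right _ _
    rw [hEval j hj] at h1 h2
    rw [Fin.val_cast_of_lt (by omega)] at h1
    rw [Fin.val_cast_of_lt (by omega)] at h2
    omega
  have hedges : edges (SimpleGraph.pathGraph n) = (Finset.range m).image E := by
    ext e
    rw [hchar, Finset.mem_image]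
    constructor
    · rintro ⟨i, hi, rfl⟩; exact ⟨i, Finset.mem_range.2 (by omega), rfl⟩
    · rintro ⟨i, hi, rfl⟩; exact ⟨i, by simp at hi; omega, rfl⟩
  have hcard : (edges (SimpleGraph.pathGraph n)).card = m := by
    rw [hedges, Finset.card_image_of_injOn, Finset.card_range]
    intro a ha b hb hab
    simp only [Finset.coe_range, Set.mem_Iio] at ha hb
    exact hEinj a b (by omega) (by omega) hab
  set f : Sym2 (Fin n) → ℕ :=
    Sym2.lift ⟨fun u v => pl m (min u.val v.val), fun u v => by simp [min_comm]⟩ with hf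
  have hfE : ∀ i, i + 1 < n → f (E i) = pl m i := by
    intro i hi
    rw [hE, hf]; dsimp only
    rw [Sym2.lift_mk]; dsimp only
    rw [Fin.val_cast_of_lt (by omega), Fin.val_cast_of_lt hi, min_eq_left (by omega)]
  have hfilter : ∀ v : Fin n,
      (edges (SimpleGraph.pathGraph n)).filter (fun e => v ∈ e)
        = ((Finset.range m).filter (fun i => v.val = i ∨ v.val = i + 1)).image E := by
    intro v
    ext e
    simp only [Finset.mem_filter, Finset.mem_image, Finset.mem_range]
    constructor
    · rintro ⟨he, hv⟩
      obtain ⟨i, hi, rfl⟩ := (hchar e).1 he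
      exact ⟨i, ⟨by omega, (hEval i hi v).1 hv⟩, rfl⟩
    · rintro ⟨i, ⟨hi, hvi⟩, rfl⟩
      exact ⟨(hchar _).2 ⟨i, by omega, rfl⟩, (hEval i (by omega) v).2 hvi⟩
  have hphi : ∀ v : Fin n, phi (SimpleGraph.pathGraph n) f v
      = ∑ i ∈ (Finset.range m).filter (fun i => v.val = i ∨ v.val = i + 1), pl m i := by
    intro v
    rw [phi, hfilter v, Finset.sum_image (fun a ha b hb hab => by
      simp only [Finset.coe_filter, Set.mem_setOf_eq, Finset.mem_filter, Finset.mem_range] at ha hb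
      exact hEinj a b (by omega) (by omega) hab)]
    apply Finset.sum_congr rfl
    intro i hi
    simp only [Finset.mem_filter, Finset.mem_range] at hi
    exact hfE i (by omega)
  have hdeg : ∀ v : Fin n, deg (SimpleGraph.pathGraph n) v
      = ((Finset.range m).filter (fun i => v.val = i ∨ v.val = i + 1)).card := by
    intro v
    rw [deg, hfilter v, Finset.card_image_of_injOn]
    intro a ha b hb hab
    simp only [Finset.coe_filter, Set.mem_setOf_eq, Finset.mem_range] at ha hb
    exact hEinj a b (by omega) (by omega) hab
  have key : ∀ w : Fin n,
      (w.val = 0 ∧ phi (SimpleGraph.pathGraph n) f w = 1 ∧ deg (SimpleGraph.pathGraph n) w = 1) ∨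
      (w.val = n - 1 ∧ phi (SimpleGraph.pathGraph n) f w = 2 ∧
        deg (SimpleGraph.pathGraph n) w = 1) ∨
      (0 < w.val ∧ w.val < n - 1 ∧
        phi (SimpleGraph.pathGraph n) f w = pl m (w.val - 1) + pl m w.val ∧
        deg (SimpleGraph.pathGraph n) w = 2) := by
    intro w
    have hw := w.isLt
    rcases Nat.eq_zero_or_pos w.val with h0 | h0
    · left
      have hs : (Finset.range m).filter (fun i => w.val = i ∨ w.val = i + 1) = {0} := by
        ext i
        simp only [Finset.mem_filter, Finset.mem_range, Finset.mem_singleton]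
        omega
      refine ⟨h0, ?_, ?_⟩
      · rw [hphi, hs, Finset.sum_singleton]
        unfold pl; split_ifs <;> omega
      · rw [hdeg, hs, Finset.card_singleton]
    rcases eq_or_lt_of_le (show w.val ≤ n - 1 by omega) with hl | hl
    · right; left
      have hs : (Finset.range m).filter (fun i => w.val = i ∨ w.val = i + 1) = {m - 1} := by
        ext i
        simp only [Finset.mem_filter, Finset.mem_range, Finset.mem_singleton]
        omega
      refine ⟨hl, ?_, ?_⟩
      · rw [hphi, hs, Finset.sum_singleton]
        unfold pl; split_ifs <;> omega
      · rw [hdeg, hs, Finset.card_singleton]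
    · right; right
      have hs : (Finset.range m).filter (fun i => w.val = i ∨ w.val = i + 1)
          = {w.val - 1, w.val} := by
        ext i
        simp only [Finset.mem_filter, Finset.mem_range, Finset.mem_insert,
          Finset.mem_singleton]
        omega
      refine ⟨h0, by omega, ?_, ?_⟩
      · rw [hphi, hs, Finset.sum_pair (by omega)]
      · rw [hdeg, hs, Finset.card_pair (by omega)]
  refine ⟨f, ⟨⟨?_, ?_, ?_⟩, ?_, ?_⟩⟩
  · -- MapsTo
    intro e he
    rw [Finset.mem_coe] at he
    obtain ⟨i, hi, rfl⟩ := (hchar e).1 he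
    rw [Set.mem_Icc, hcard, hfE i hi]
    exact pl_bounds (by omega)
  · -- InjOn
    intro e1 h1 e2 h2 heq
    rw [Finset.mem_coe] at h1 h2
    obtain ⟨i, hi, rfl⟩ := (hchar e1).1 h1
    obtain ⟨j, hj, rfl⟩ := (hchar e2).1 h2
    rw [hfE i hi, hfE j hj] at heq
    rw [pl_inj (show i < m by omega) (show j < m by omega) heq]
  · -- SurjOn
    intro k hk
    rw [Set.mem_Icc, hcard] at hk
    obtain ⟨i, him, hik⟩ := pl_surj hk.1 hk.2
    exact ⟨E i, Finset.mem_coe.2 (hEmem i (by omega)), by rw [hfE i (by omega), hik]⟩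
  · -- distinct phi
    intro u v huv
    have hne : u.val ≠ v.val := fun h => huv (Fin.ext h)
    rcases key u with ⟨hu, hpu, _⟩ | ⟨hu, hpu, _⟩ | ⟨hu1, hu2, hpu, _⟩ <;>
      rcases key v with ⟨hv, hpv, _⟩ | ⟨hv, hpv, _⟩ | ⟨hv1, hv2, hpv, _⟩ <;>
      rw [hpu, hpv]
    · omega
    · omega
    · have := pl_sum_ge hm (by omega) (by omega : v.val ≤ m - 1)
      omega
    · omega
    · omega
    · have := pl_sum_ge hm (by omega) (by omega : v.val ≤ m - 1)
      omega
    · have := pl_sum_ge hm (by omega) (by omega : u.val ≤ m - 1)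
      omega
    · have := pl_sum_ge hm (by omega) (by omega : u.val ≤ m - 1)
      omega
    · rcases lt_trichotomy u.val v.val with h | h | h
      · exact pl_sum_inj (by omega) h (by omega)
      · omega
      · exact (pl_sum_inj (by omega) h (by omega)).symm
  · -- degree condition
    intro u v hduv
    rcases key u with ⟨hu, hpu, hdu⟩ | ⟨hu, hpu, hdu⟩ | ⟨hu1, hu2, hpu, hdu⟩ <;>
      rcases key v with ⟨hv, hpv, hdv⟩ | ⟨hv, hpv, hdv⟩ | ⟨hv1, hv2, hpv, hdv⟩ <;>
      rw [hdu, hdv] at hduv <;> try omega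
    all_goals
      rw [hpu, hpv]
      have := pl_sum_ge hm (by omega) (by omega : u.val ≤ m - 1)
      omega
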